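/- Let U be a finite set, L ≥ 1, and let μ be a probability distribution over subsets of U such that every set in the support of μ has size at most L. For f ∈ U let Q(f) = Pr_{H'∼μ}[f ∈ H']. Let τ, β ∈ (0, 0.1), let k₁ = ⌈10⁶·log(L/(βτ))/τ²⌉, draw H₁, …, H_{k₁} i.i.d. from μ, and let H be the set of all f ∈ U appearing in at least τ·k₁ of the sets H₁, …, H_{k₁}. Then with probability at least 1 − β²/30 over the draws, {f ∈ U : Q(f) ≥ 1.1τ} ⊆ H ⊆ {f ∈ U : Q(f) ≥ 0.9τ}. -/

import Mathlib

open scoped ENNReal Classical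

noncomputable section

def pmfPi {β : Type*} : {n : ℕ} → (Fin n → PMF β) → PMF (Fin n → β)
  | 0, _ => PMF.pure Fin.elim0
  | _ + 1, p => (p 0).bind fun b => (pmfPi fun i => p i.succ).bind fun f => PMF.pure (Fin.cons b f)

def iidPMF {Z : Type*} (D : PMF Z) (m : ℕ) : PMF (Fin m → Z) := pmfPi fun _ => D

def pr {α : Type*} (p : PMF α) (s : Set α) : ℝ≥0∞ := p.toOuterMeasure s



namespace Stmt8Aux

lemma pmfPi_apply {β : Type*} : ∀ {n : ℕ} (p : Fin n → PMF β) (s : Fin n → β),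
    pmfPi p s = ∏ i, p i (s i)
  | 0, p, s => by
      simp [pmfPi, PMF.pure_apply, Subsingleton.elim s Fin.elim0]
  | n + 1, p, s => by
      show ((p 0).bind fun b => (pmfPi fun i => p i.succ).bind fun f => PMF.pure (Fin.cons b f)) s
          = _
      rw [PMF.bind_apply]
      rw [tsum_eq_single (s 0) ?side1]
      · rw [PMF.bind_apply, tsum_eq_single (Fin.tail s) ?side2]
        · rw [pmfPi_apply]
          have hpure : (PMF.pure (Fin.cons (s 0) (Fin.tail s)) : PMF (Fin (n+1) → β)) s = 1 := by
            rw [PMF.pure_apply, if_pos (Fin.cons_self_tail s).symm]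
          rw [hpure, mul_one, Fin.prod_univ_succ]
          rfl
        · intro f hf
          have : s ≠ Fin.cons (s 0) f := by
            intro h
            exact hf (by rw [h, Fin.tail_cons])
          simp [PMF.pure_apply, this]
      · intro b hb
        have : ∀ f : Fin n → β, (PMF.pure (Fin.cons b f) : PMF (Fin (n+1) → β)) s = 0 := by
          intro f
          have : s ≠ Fin.cons b f := by
            intro h
            exact hb (by rw [h, Fin.cons_zero])
          simp [PMF.pure_apply, this]
        simp [PMF.bind_apply, this]

def consEquiv' {β : Type*} (n : ℕ) : β × (Fin n → β) ≃ (Fin (n + 1) → β) where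
  toFun x := Fin.cons x.1 x.2
  invFun s := (s 0, Fin.tail s)
  left_inv x := by simp
  right_inv s := by simp

lemma tsum_prod_fn {β : Type*} : ∀ {n : ℕ} (F : Fin n → β → ℝ≥0∞),
    ∑' s : Fin n → β, ∏ i, F i (s i) = ∏ i, ∑' b, F i b
  | 0, F => by
      rw [tsum_eq_single (fun i => i.elim0) (by intro b hb; exact absurd (Subsingleton.elim _ _) hb)]
      simp
  | n + 1, F => by
      rw [← Equiv.tsum_eq (consEquiv' n) (fun s => ∏ i, F i (s i))]
      have : ∀ x : β × (Fin n → β), (∏ i, F i ((consEquiv' n) x i))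
          = F 0 x.1 * ∏ i : Fin n, F i.succ (x.2 i) := by
        intro x
        rw [Fin.prod_univ_succ]
        simp [consEquiv']
      simp_rw [this]
      rw [ENNReal.tsum_prod (f := fun (b : β) (t : Fin n → β) => F 0 b * ∏ i : Fin n, F i.succ (t i))]
      simp_rw [ENNReal.tsum_mul_left]
      rw [ENNReal.tsum_mul_right, tsum_prod_fn (fun i b => F i.succ b), Fin.prod_univ_succ]

lemma iidPMF_apply {β : Type*} (D : PMF β) (n : ℕ) (s : Fin n → β) :
    iidPMF D n s = ∏ i, D (s i) := pmfPi_apply _ s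

lemma iid_exp {β : Type*} (D : PMF β) (n : ℕ) (g : β → ℝ≥0∞) :
    ∑' s : Fin n → β, iidPMF D n s * ∏ i, g (s i) = (∑' b, D b * g b) ^ n := by
  have h : ∀ s : Fin n → β, iidPMF D n s * ∏ i, g (s i) = ∏ i, (D (s i) * g (s i)) := by
    intro s; rw [iidPMF_apply, ← Finset.prod_mul_distrib]
  simp_rw [h]
  rw [tsum_prod_fn (fun _ b => D b * g b)]
  simp

end Stmt8Aux

namespace Stmt8Aux

lemma pr_le_one {α : Type*} (p : PMF α) (S : Set α) : pr p S ≤ 1 := by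
  rw [pr, PMF.toOuterMeasure_apply]
  calc ∑' x, S.indicator p x ≤ ∑' x, p x :=
        ENNReal.tsum_le_tsum fun x => Set.indicator_apply_le fun _ => le_rfl
    _ = 1 := p.tsum_coe

lemma markov {α : Type*} (p : PMF α) (X : α → ℝ≥0∞) (a : ℝ≥0∞) :
    pr p {s | a ≤ X s} * a ≤ ∑' s, p s * X s := by
  rw [pr, PMF.toOuterMeasure_apply, ← ENNReal.tsum_mul_right]
  refine ENNReal.tsum_le_tsum fun s => ?_
  by_cases h : a ≤ X s
  · rw [Set.indicator_of_mem (by exact h)]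
    exact mul_le_mul_right h _
  · rw [Set.indicator_of_notMem (by exact h), zero_mul]
    exact zero_le

lemma pr_compl_ge {α : Type*} (p : PMF α) (S : Set α) : 1 - pr p Sᶜ ≤ pr p S := by
  have h : (1 : ℝ≥0∞) ≤ pr p S + pr p Sᶜ := by
    have h2 : pr p (S ∪ Sᶜ) ≤ pr p S + pr p Sᶜ := MeasureTheory.measure_union_le S Sᶜ
    refine le_trans ?_ h2
    rw [Set.union_compl_self, pr, PMF.toOuterMeasure_apply]
    simp [p.tsum_coe]
  exact tsub_le_iff_right.mpr (h.trans (by rw [add_comm]))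

variable {U : Type*} [Fintype U] [DecidableEq U]

def cnt (f : U) {k : ℕ} (s : Fin k → Finset U) : ℕ := (Finset.univ.filter fun i => f ∈ s i).card

lemma mgf_single (μ : PMF (Finset U)) (f : U) (l : ℝ) (hl : 0 ≤ l) :
    ∑' b : Finset U, μ b * (if f ∈ b then ENNReal.ofReal l else 1)
      ≤ ENNReal.ofReal (Real.exp ((l - 1) * (pr μ {Hs | f ∈ Hs}).toReal)) := by
  set q := pr μ {Hs | f ∈ Hs} with hqdef
  have hq1 : q ≤ 1 := pr_le_one μ _
  have hqt : q ≠ ⊤ := (hq1.trans_lt ENNReal.one_lt_top).ne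
  set qR := q.toReal with hqR
  have hqR0 : 0 ≤ qR := ENNReal.toReal_nonneg
  have hqR1 : qR ≤ 1 := by
    rw [hqR, ← ENNReal.toReal_one]
    exact ENNReal.toReal_mono ENNReal.one_ne_top hq1
  have hqof : ENNReal.ofReal qR = q := ENNReal.ofReal_toReal hqt
  have hqind : ∑' b : Finset U, (if f ∈ b then μ b else 0) = q := by
    rw [hqdef, pr, PMF.toOuterMeasure_apply]
    congr 1; funext b; simp [Set.indicator_apply]
  have hsum2 : ∑' b : Finset U, (if f ∈ b then (0:ℝ≥0∞) else μ b) = 1 - q := by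
    have hadd : (∑' b : Finset U, (if f ∈ b then μ b else 0))
        + ∑' b : Finset U, (if f ∈ b then (0:ℝ≥0∞) else μ b) = 1 := by
      rw [← ENNReal.tsum_add, ← μ.tsum_coe]
      congr 1; funext b; by_cases h : f ∈ b <;> simp [h]
    rw [hqind] at hadd
    exact ENNReal.eq_sub_of_add_eq hqt (by rw [add_comm]; exact hadd)
  calc ∑' b : Finset U, μ b * (if f ∈ b then ENNReal.ofReal l else 1)
      = ENNReal.ofReal l * q + (1 - q) := by
        have hsplit : ∀ b : Finset U, μ b * (if f ∈ b then ENNReal.ofReal l else 1)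
            = ENNReal.ofReal l * (if f ∈ b then μ b else 0) + (if f ∈ b then 0 else μ b) := by
          intro b; by_cases h : f ∈ b <;> simp [h, mul_comm]
        simp_rw [hsplit]
        rw [ENNReal.tsum_add, ENNReal.tsum_mul_left, hqind, hsum2]
    _ = ENNReal.ofReal (l * qR + (1 - qR)) := by
        rw [ENNReal.ofReal_add (by positivity) (by linarith), ENNReal.ofReal_mul hl, hqof,
          ENNReal.ofReal_sub _ hqR0, ENNReal.ofReal_one, hqof]
    _ ≤ ENNReal.ofReal (Real.exp ((l - 1) * qR)) := by
        apply ENNReal.ofReal_le_ofReal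
        have h := Real.add_one_le_exp ((l - 1) * qR)
        nlinarith

lemma chernoff (μ : PMF (Finset U)) (f : U) (k : ℕ) (l : ℝ) (hl : 0 ≤ l) (c : ℝ) :
    pr (iidPMF μ k) {s | ENNReal.ofReal (l ^ c) ≤ ENNReal.ofReal l ^ cnt f s}
        * ENNReal.ofReal (l ^ c)
      ≤ ENNReal.ofReal (Real.exp ((l - 1) * (pr μ {Hs | f ∈ Hs}).toReal * k)) := by
  have h1 := markov (iidPMF μ k) (fun s => ENNReal.ofReal l ^ cnt f s) (ENNReal.ofReal (l ^ c))
  refine h1.trans ?_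
  have h2 : ∀ s : Fin k → Finset U,
      (ENNReal.ofReal l) ^ cnt f s = ∏ i, (if f ∈ s i then ENNReal.ofReal l else 1) := by
    intro s
    rw [Finset.prod_ite, Finset.prod_const, Finset.prod_const, one_pow, mul_one, cnt]
  calc ∑' s, iidPMF μ k s * (ENNReal.ofReal l) ^ cnt f s
      = (∑' b, μ b * (if f ∈ b then ENNReal.ofReal l else 1)) ^ k := by
        simp_rw [h2]
        exact iid_exp μ k (fun b => if f ∈ b then ENNReal.ofReal l else 1)
    _ ≤ (ENNReal.ofReal (Real.exp ((l - 1) * (pr μ {Hs | f ∈ Hs}).toReal))) ^ k := by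
        exact pow_le_pow_left₀ zero_le (mgf_single μ f l hl) k
    _ = ENNReal.ofReal (Real.exp ((l - 1) * (pr μ {Hs | f ∈ Hs}).toReal * k)) := by
        rw [← ENNReal.ofReal_pow (Real.exp_pos _).le, ← Real.exp_nat_mul]
        congr 1; ring

end Stmt8Aux

namespace Stmt8Aux

lemma log_point9 : Real.log 0.9 ≤ -0.102 := by
  rw [Real.log_le_iff_le_exp (by norm_num)]
  have h : Real.exp (-0.102) = Real.exp (-0.051) * Real.exp (-0.051) := by
    rw [← Real.exp_add]; norm_num
  have h2 : (0.949 : ℝ) ≤ Real.exp (-0.051) := by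
    have := Real.add_one_le_exp (-0.051 : ℝ); linarith
  have h3 : (0 : ℝ) ≤ 0.949 := by norm_num
  nlinarith [Real.exp_pos (-0.051 : ℝ)]

lemma exp_point099 : (1.1 : ℝ) ≤ Real.exp 0.099 := by
  have h : Real.exp (0.099 : ℝ) = Real.exp 0.0495 * Real.exp 0.0495 := by
    rw [← Real.exp_add]; norm_num
  have h2 : (1.0495 : ℝ) ≤ Real.exp 0.0495 := by
    have := Real.add_one_le_exp (0.0495 : ℝ); linarith
  nlinarith [Real.exp_pos (0.0495 : ℝ)]

lemma log_onepointone : Real.log 1.1 ≤ 0.099 := by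
  rw [Real.log_le_iff_le_exp (by norm_num)]
  exact exp_point099

lemma gB {r : ℝ} (h0 : 0 < r) (hr : r ≤ 0.9) : 1 - r + Real.log r ≤ -0.002 := by
  have h1 : Real.log (r / 0.9) ≤ r / 0.9 - 1 := Real.log_le_sub_one_of_pos (by positivity)
  have h2 : Real.log (r / 0.9) = Real.log r - Real.log 0.9 :=
    Real.log_div h0.ne' (by norm_num)
  rw [h2] at h1
  have h5 : r / 0.9 = 10 / 9 * r := by ring
  rw [h5] at h1
  linarith [log_point9]

lemma gA {r : ℝ} (hr : 1.1 ≤ r) : 1 - r + Real.log r ≤ -0.001 := by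
  have h0 : (0 : ℝ) < r := by linarith
  have h1 : Real.log (r / 1.1) ≤ r / 1.1 - 1 := Real.log_le_sub_one_of_pos (by positivity)
  have h2 : Real.log (r / 1.1) = Real.log r - Real.log 1.1 :=
    Real.log_div h0.ne' (by norm_num)
  rw [h2] at h1
  have h5 : r / 1.1 = 10 / 11 * r := by ring
  rw [h5] at h1
  linarith [log_onepointone]

lemma key_ineq_B {r K : ℝ} (h0 : 0 < r) (hr : r ≤ 0.9) (hK : 2000 ≤ K) :
    K * (1 - r + Real.log r) ≤ Real.log r - 0.001 * K := by
  have hK0 : (0 : ℝ) ≤ K := by linarith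
  by_cases hy : -2 ≤ Real.log r
  · have hg := gB h0 hr
    nlinarith [mul_le_mul_of_nonneg_left hg hK0]
  · push_neg at hy
    have h1 : K * (1 - r + Real.log r) ≤ K * (1 + Real.log r) :=
      mul_le_mul_of_nonneg_left (by linarith) hK0
    have h2 : (K - 1) * (Real.log r + 2) ≤ 0 :=
      mul_nonpos_of_nonneg_of_nonpos (by linarith) (by linarith)
    nlinarith

lemma key_ineq_A {r K : ℝ} (hr : 1.1 ≤ r) (hK : 0 ≤ K) :
    K * (1 - r + Real.log r) ≤ -0.001 * K := by
  have hg := gA hr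
  nlinarith [mul_le_mul_of_nonneg_left hg hK]

end Stmt8Aux

namespace Stmt8Aux

variable {U : Type*} [Fintype U] [DecidableEq U]

lemma tail_small (μ : PMF (Finset U)) (f : U) (k : ℕ) (τ : ℝ) (hτ : 0 < τ)
    (hK : 2000 ≤ τ * k)
    (hq0 : 0 < (pr μ {Hs | f ∈ Hs}).toReal) (hq : (pr μ {Hs | f ∈ Hs}).toReal ≤ 0.9 * τ) :
    pr (iidPMF μ k) {s | τ * k ≤ (cnt f s : ℝ)}
      ≤ ENNReal.ofReal (((pr μ {Hs | f ∈ Hs}).toReal / τ) * Real.exp (-(0.001) * (τ * k))) := by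
  set qR := (pr μ {Hs | f ∈ Hs}).toReal with hqRdef
  set l := τ / qR with hldef
  have hl1 : 1 ≤ l := (one_le_div hq0).mpr (by linarith)
  have hl0 : 0 < l := lt_of_lt_of_le one_pos hl1
  have hrp : (0:ℝ) < l ^ (τ * k) := Real.rpow_pos_of_pos hl0 _
  have hsub : {s : Fin k → Finset U | τ * k ≤ (cnt f s : ℝ)}
      ⊆ {s | ENNReal.ofReal (l ^ (τ * k)) ≤ ENNReal.ofReal l ^ cnt f s} := by
    intro s hs
    simp only [Set.mem_setOf_eq] at hs ⊢
    rw [← ENNReal.ofReal_pow hl0.le]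
    apply ENNReal.ofReal_le_ofReal
    calc l ^ (τ * k) ≤ l ^ ((cnt f s : ℝ)) := Real.rpow_le_rpow_of_exponent_le hl1 hs
      _ = l ^ cnt f s := Real.rpow_natCast l (cnt f s)
  have hch := chernoff μ f k l hl0.le (τ * k)
  have hmono : pr (iidPMF μ k) {s | τ * k ≤ (cnt f s : ℝ)}
      ≤ pr (iidPMF μ k) {s | ENNReal.ofReal (l ^ (τ * k)) ≤ ENNReal.ofReal l ^ cnt f s} :=
    (iidPMF μ k).toOuterMeasure.mono hsub
  have key : pr (iidPMF μ k) {s | τ * k ≤ (cnt f s : ℝ)} * ENNReal.ofReal (l ^ (τ * k))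
      ≤ ENNReal.ofReal (Real.exp ((l - 1) * qR * k)) :=
    le_trans (mul_le_mul_left hmono _) hch
  have ha0 : ENNReal.ofReal (l ^ (τ * k)) ≠ 0 := by
    simp only [ne_eq, ENNReal.ofReal_eq_zero, not_le]; exact hrp
  have hdiv := (ENNReal.le_div_iff_mul_le (Or.inl ha0) (Or.inr ENNReal.ofReal_ne_top)).mpr key
  refine hdiv.trans ?_
  rw [← ENNReal.ofReal_div_of_pos hrp]
  apply ENNReal.ofReal_le_ofReal
  -- real inequality
  set r := qR / τ with hrdef
  have hr0 : 0 < r := div_pos hq0 hτ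
  have hr9 : r ≤ 0.9 := by rw [hrdef]; rw [div_le_iff₀ hτ]; linarith
  have hlr : l = r⁻¹ := by rw [hldef, hrdef]; field_simp
  have hlogl : Real.log l = -Real.log r := by rw [hlr, Real.log_inv]
  have hqRr : qR = r * τ := by rw [hrdef]; field_simp
  have hKk : 2000 ≤ τ * (k:ℝ) := hK
  calc Real.exp ((l - 1) * qR * k) / l ^ (τ * k)
      = Real.exp ((l - 1) * qR * k) / Real.exp (Real.log l * (τ * k)) := by
        rw [Real.rpow_def_of_pos hl0]
    _ = Real.exp ((l - 1) * qR * k - Real.log l * (τ * k)) := by rw [← Real.exp_sub]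
    _ = Real.exp ((τ * k) * (1 - r + Real.log r)) := by
        congr 1
        rw [hlogl]
        have : (l - 1) * qR = τ - qR := by
          rw [hldef]; field_simp
        rw [this, hqRr]; ring
    _ ≤ Real.exp (Real.log r - 0.001 * (τ * k)) := by
        apply Real.exp_le_exp.mpr
        exact key_ineq_B hr0 hr9 hKk
    _ = qR / τ * Real.exp (-(0.001) * (τ * k)) := by
        rw [Real.exp_sub, Real.exp_log hr0, hrdef, neg_mul, Real.exp_neg]
        ring

lemma tail_big (μ : PMF (Finset U)) (f : U) (k : ℕ) (τ : ℝ) (hτ : 0 < τ)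
    (hq : 1.1 * τ ≤ (pr μ {Hs | f ∈ Hs}).toReal) :
    pr (iidPMF μ k) {s | ¬ (τ * k ≤ (cnt f s : ℝ))}
      ≤ ENNReal.ofReal (Real.exp (-(0.001) * (τ * k))) := by
  set qR := (pr μ {Hs | f ∈ Hs}).toReal with hqRdef
  have hq0 : 0 < qR := by nlinarith
  set l := τ / qR with hldef
  have hl0 : 0 < l := div_pos hτ hq0
  have hl1 : l ≤ 1 := by rw [hldef, div_le_one hq0]; linarith
  have hrp : (0:ℝ) < l ^ (τ * k) := Real.rpow_pos_of_pos hl0 _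
  have hsub : {s : Fin k → Finset U | ¬ (τ * k ≤ (cnt f s : ℝ))}
      ⊆ {s | ENNReal.ofReal (l ^ (τ * k)) ≤ ENNReal.ofReal l ^ cnt f s} := by
    intro s hs
    simp only [Set.mem_setOf_eq, not_le] at hs
    simp only [Set.mem_setOf_eq]
    rw [← ENNReal.ofReal_pow hl0.le]
    apply ENNReal.ofReal_le_ofReal
    calc l ^ (τ * k) ≤ l ^ ((cnt f s : ℝ)) :=
          Real.rpow_le_rpow_of_exponent_ge hl0 hl1 hs.le
      _ = l ^ cnt f s := Real.rpow_natCast l (cnt f s)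
  have hch := chernoff μ f k l hl0.le (τ * k)
  have hmono : pr (iidPMF μ k) {s | ¬ (τ * k ≤ (cnt f s : ℝ))}
      ≤ pr (iidPMF μ k) {s | ENNReal.ofReal (l ^ (τ * k)) ≤ ENNReal.ofReal l ^ cnt f s} :=
    (iidPMF μ k).toOuterMeasure.mono hsub
  have key : pr (iidPMF μ k) {s | ¬ (τ * k ≤ (cnt f s : ℝ))} * ENNReal.ofReal (l ^ (τ * k))
      ≤ ENNReal.ofReal (Real.exp ((l - 1) * qR * k)) :=
    le_trans (mul_le_mul_left hmono _) hch
  have ha0 : ENNReal.ofReal (l ^ (τ * k)) ≠ 0 := by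
    simp only [ne_eq, ENNReal.ofReal_eq_zero, not_le]; exact hrp
  have hdiv := (ENNReal.le_div_iff_mul_le (Or.inl ha0) (Or.inr ENNReal.ofReal_ne_top)).mpr key
  refine hdiv.trans ?_
  rw [← ENNReal.ofReal_div_of_pos hrp]
  apply ENNReal.ofReal_le_ofReal
  set r := qR / τ with hrdef
  have hr0 : 0 < r := div_pos hq0 hτ
  have hr11 : 1.1 ≤ r := by rw [hrdef, le_div_iff₀ hτ]; linarith
  have hlr : l = r⁻¹ := by rw [hldef, hrdef]; field_simp
  have hlogl : Real.log l = -Real.log r := by rw [hlr, Real.log_inv]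
  have hqRr : qR = r * τ := by rw [hrdef]; field_simp
  have hKnn : (0:ℝ) ≤ τ * k := by positivity
  calc Real.exp ((l - 1) * qR * k) / l ^ (τ * k)
      = Real.exp ((l - 1) * qR * k) / Real.exp (Real.log l * (τ * k)) := by
        rw [Real.rpow_def_of_pos hl0]
    _ = Real.exp ((l - 1) * qR * k - Real.log l * (τ * k)) := by rw [← Real.exp_sub]
    _ = Real.exp ((τ * k) * (1 - r + Real.log r)) := by
        congr 1
        rw [hlogl]
        have : (l - 1) * qR = τ - qR := by
          rw [hldef]; field_simp
        rw [this, hqRr]; ring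
    _ ≤ Real.exp (-(0.001) * (τ * k)) := by
        apply Real.exp_le_exp.mpr
        have := key_ineq_A hr11 hKnn
        linarith

end Stmt8Aux

namespace Stmt8Aux

variable {U : Type*} [Fintype U] [DecidableEq U]

lemma sum_toReal_one (μ : PMF (Finset U)) : ∑ Hs : Finset U, (μ Hs).toReal = 1 := by
  have h := μ.tsum_coe
  rw [tsum_fintype] at h
  have h2 : (∑ Hs : Finset U, μ Hs).toReal = (1 : ℝ≥0∞).toReal := by rw [h]
  rw [ENNReal.toReal_sum (fun a _ => PMF.apply_ne_top μ a)] at h2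
  simpa using h2

lemma q_as_sum (μ : PMF (Finset U)) (f : U) :
    (pr μ {Hs | f ∈ Hs}).toReal = ∑ Hs : Finset U, (if f ∈ Hs then (μ Hs).toReal else 0) := by
  have h : pr μ {Hs | f ∈ Hs} = ∑ Hs : Finset U, (if f ∈ Hs then μ Hs else 0) := by
    rw [pr, PMF.toOuterMeasure_apply, tsum_fintype]
    congr 1; funext Hs; simp [Set.indicator_apply]
  rw [h, ENNReal.toReal_sum (fun a _ => by split <;> simp [PMF.apply_ne_top μ a])]
  congr 1; funext Hs; split <;> simp

lemma sum_q_le (μ : PMF (Finset U)) (L : ℝ) (hL : 0 ≤ L)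
    (hsupp : ∀ Hs ∈ μ.support, (Hs.card : ℝ) ≤ L) :
    ∑ f : U, (pr μ {Hs | f ∈ Hs}).toReal ≤ L := by
  calc ∑ f : U, (pr μ {Hs | f ∈ Hs}).toReal
      = ∑ f : U, ∑ Hs : Finset U, (if f ∈ Hs then (μ Hs).toReal else 0) := by
        exact Finset.sum_congr rfl fun f _ => q_as_sum μ f
    _ = ∑ Hs : Finset U, ∑ f : U, (if f ∈ Hs then (μ Hs).toReal else 0) := Finset.sum_comm
    _ = ∑ Hs : Finset U, (Hs.card : ℝ) * (μ Hs).toReal := by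
        refine Finset.sum_congr rfl fun Hs _ => ?_
        rw [Finset.sum_ite_mem, Finset.univ_inter, Finset.sum_const, nsmul_eq_mul]
    _ ≤ ∑ Hs : Finset U, L * (μ Hs).toReal := by
        refine Finset.sum_le_sum fun Hs _ => ?_
        by_cases h : μ Hs = 0
        · simp [h]
        · exact mul_le_mul_of_nonneg_right (hsupp Hs (PMF.mem_support_iff μ Hs |>.mpr h))
            ENNReal.toReal_nonneg
    _ = L := by rw [← Finset.mul_sum, sum_toReal_one, mul_one]

lemma pr_cnt_zero (μ : PMF (Finset U)) (f : U) (k : ℕ) (τ : ℝ) (hτk : 0 < τ * k)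
    (hq : (pr μ {Hs | f ∈ Hs}).toReal = 0) :
    pr (iidPMF μ k) {s | τ * k ≤ (cnt f s : ℝ)} = 0 := by
  have hqtop : pr μ {Hs | f ∈ Hs} ≠ ⊤ := ((pr_le_one μ _).trans_lt ENNReal.one_lt_top).ne
  have hq0 : pr μ {Hs | f ∈ Hs} = 0 := by
    rcases (ENNReal.toReal_eq_zero_iff _).mp hq with h | h
    · exact h
    · exact absurd h hqtop
  rw [pr, PMF.toOuterMeasure_apply_eq_zero_iff]
  rw [Set.disjoint_left]
  intro s hsW hsmem
  simp only [Set.mem_setOf_eq] at hsmem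
  have hcnt : 0 < cnt f s := by
    rcases Nat.eq_zero_or_pos (cnt f s) with hc | hc
    · rw [hc] at hsmem; norm_num at hsmem; linarith
    · exact hc
  obtain ⟨i, hi⟩ : ∃ i, f ∈ s i := by
    obtain ⟨i, hi⟩ := Finset.card_pos.mp hcnt
    exact ⟨i, (Finset.mem_filter.mp hi).2⟩
  have hWs : iidPMF μ k s ≠ 0 := (PMF.mem_support_iff _ s).mp hsW
  rw [iidPMF_apply] at hWs
  have hne : μ (s i) ≠ 0 := by
    intro h0
    exact hWs (Finset.prod_eq_zero (Finset.mem_univ i) h0)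
  have hle : μ (s i) ≤ pr μ {Hs | f ∈ Hs} := by
    rw [pr, PMF.toOuterMeasure_apply]
    have h := ENNReal.le_tsum (f := fun b => Set.indicator {Hs | f ∈ Hs} μ b) (s i)
    simpa [Set.indicator_apply, hi] using h
  rw [hq0, le_zero_iff] at hle
  exact hne hle

lemma final_numeric (L τ β K : ℝ) (hL : 1 ≤ L) (hτ0 : 0 < τ) (hτ1 : τ < 0.1)
    (hβ0 : 0 < β) (hβ1 : β < 0.1) (hK : 10 ^ 7 * Real.log (L / (β * τ)) ≤ K) :
    L / τ * Real.exp (-(0.001) * K) ≤ β ^ 2 / 30 := by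
  have hβτ : 0 < β * τ := mul_pos hβ0 hτ0
  have hX0 : 0 < L / (β * τ) := by positivity
  set X := L / (β * τ) with hXdef
  have hX100 : 100 ≤ X := by
    rw [hXdef, le_div_iff₀ hβτ]
    nlinarith
  have hlogX : 0 < Real.log X := Real.log_pos (by linarith)
  have hexp1 : Real.exp (-(0.001) * K) ≤ Real.exp (-(10 ^ 4 : ℝ) * Real.log X) := by
    apply Real.exp_le_exp.mpr
    nlinarith
  have hexp2 : Real.exp (-(10 ^ 4 : ℝ) * Real.log X) = (X⁻¹) ^ (10000 : ℕ) := by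
    have h1 : (-(10 ^ 4 : ℝ)) * Real.log X = (10000 : ℕ) * Real.log X⁻¹ := by
      rw [Real.log_inv]; push_cast; ring
    rw [h1, Real.exp_nat_mul, Real.exp_log (by positivity)]
  set t := X⁻¹ with htdef
  have ht0 : 0 < t := by positivity
  have ht001 : t ≤ 0.01 := by
    have h2 : X⁻¹ ≤ 100⁻¹ := inv_anti₀ (by norm_num) hX100
    rw [htdef]
    norm_num at h2 ⊢
    linarith
  have htL : t = β * τ / L := by rw [htdef, hXdef, inv_div]
  have hL0 : (0:ℝ) < L := by linarith
  have key3 : L / τ * t ^ 3 ≤ β ^ 2 * (1 / 30) := by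
    rw [htL, div_pow]
    have heq : L / τ * ((β * τ) ^ 3 / L ^ 3) = β ^ 3 * τ ^ 2 / L ^ 2 := by
      field_simp
    rw [heq]
    have hL2 : (1:ℝ) ≤ L ^ 2 := by nlinarith
    have h1 : β ^ 3 * τ ^ 2 / L ^ 2 ≤ β ^ 3 * τ ^ 2 :=
      div_le_self (by positivity) hL2
    have hτ2 : τ ^ 2 ≤ 0.01 := by nlinarith
    have hbt : β * τ ^ 2 ≤ 0.001 := by nlinarith
    have h3 : β ^ 3 * τ ^ 2 = β ^ 2 * (β * τ ^ 2) := by ring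
    have h4 : β ^ 2 * (β * τ ^ 2) ≤ β ^ 2 * (1 / 30) := by
      apply mul_le_mul_of_nonneg_left (by linarith) (by positivity)
    linarith
  calc L / τ * Real.exp (-(0.001) * K)
      ≤ L / τ * t ^ (10000 : ℕ) := by
        refine mul_le_mul_of_nonneg_left ?_ (by positivity)
        rw [← hexp2]; exact hexp1
    _ = (L / τ * t ^ 3) * t ^ 9997 := by ring
    _ ≤ (β ^ 2 * (1 / 30)) * 1 := by
        refine mul_le_mul key3 (pow_le_one₀ ht0.le (by linarith)) (by positivity) (by positivity)
    _ = β ^ 2 / 30 := by ring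

end Stmt8Aux

open Stmt8Aux in
/-- after `k₁ = ⌈10⁶·log(L/(βτ))/τ²⌉` i.i.d. draws from `μ`, the set `H` of
elements appearing in at least a `τ` fraction of the draws is, with probability at least
`1 − β²/30`, sandwiched between `{f : Q(f) ≥ 1.1τ}` and `{f : Q(f) ≥ 0.9τ}`. -/
theorem stmt8 {U : Type*} [Fintype U] [DecidableEq U] (μ : PMF (Finset U)) (L : ℝ)
    (hL : 1 ≤ L) (hsupp : ∀ Hs ∈ μ.support, (Hs.card : ℝ) ≤ L) (τ β : ℝ)
    (hτ : τ ∈ Set.Ioo (0 : ℝ) 0.1) (hβ : β ∈ Set.Ioo (0 : ℝ) 0.1)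
    (Q : U → ℝ) (hQ : ∀ f, Q f = (pr μ {Hs | f ∈ Hs}).toReal)
    (k₁ : ℕ) (hk₁ : k₁ = ⌈10 ^ 6 * Real.log (L / (β * τ)) / τ ^ 2⌉₊)
    (Hof : (Fin k₁ → Finset U) → Finset U)
    (hHof : ∀ s, Hof s =
      Finset.univ.filter fun f => τ * k₁ ≤ ((Finset.univ.filter fun i => f ∈ s i).card : ℝ)) :
    pr (iidPMF μ k₁)
      {s | {f | 1.1 * τ ≤ Q f} ⊆ ↑(Hof s) ∧ ↑(Hof s) ⊆ {f | 0.9 * τ ≤ Q f}}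
      ≥ ENNReal.ofReal (1 - β ^ 2 / 30) := by
  obtain ⟨hτ0, hτ1⟩ := hτ
  obtain ⟨hβ0, hβ1⟩ := hβ
  have hβτ : 0 < β * τ := mul_pos hβ0 hτ0
  set X := L / (β * τ) with hXdef
  have hX0 : 0 < X := by positivity
  have hX100 : 100 ≤ X := by
    rw [hXdef, le_div_iff₀ hβτ]
    nlinarith
  have hlog1 : 1 ≤ Real.log X := by
    have h1 : Real.exp 1 ≤ 100 := by
      have := Real.exp_one_lt_d9
      linarith
    have h2 : (1:ℝ) ≤ Real.log 100 := (Real.le_log_iff_exp_le (by norm_num)).mpr h1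
    exact h2.trans (Real.log_le_log (by norm_num) hX100)
  have hk₁R : 10 ^ 6 * Real.log X / τ ^ 2 ≤ (k₁ : ℝ) := by
    rw [hk₁]; exact Nat.le_ceil _
  set K := τ * (k₁ : ℝ) with hKdef
  have hK1 : 10 ^ 7 * Real.log X ≤ K := by
    have h1 : 10 ^ 6 * Real.log X / τ ≤ K := by
      rw [hKdef]
      rw [div_le_iff₀ hτ0]
      calc 10 ^ 6 * Real.log X = (10 ^ 6 * Real.log X / τ ^ 2) * τ ^ 2 := by field_simp
        _ ≤ (k₁ : ℝ) * τ ^ 2 := by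
            apply mul_le_mul_of_nonneg_right hk₁R (by positivity)
        _ = τ * (k₁ : ℝ) * τ := by ring
    refine le_trans ?_ h1
    rw [le_div_iff₀ hτ0]
    nlinarith
  have hK2000 : (2000 : ℝ) ≤ K := by nlinarith
  have hKpos : (0:ℝ) < K := by linarith
  set W := iidPMF μ k₁ with hW
  set S : Set (Fin k₁ → Finset U) :=
    {s | {f | 1.1 * τ ≤ Q f} ⊆ ↑(Hof s) ∧ ↑(Hof s) ⊆ {f | 0.9 * τ ≤ Q f}} with hS
  set E : U → Set (Fin k₁ → Finset U) := fun f =>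
    if 1.1 * τ ≤ Q f then {s | ¬ (τ * k₁ ≤ (cnt f s : ℝ))}
    else if 0.9 * τ ≤ Q f then ∅
    else {s | τ * k₁ ≤ (cnt f s : ℝ)} with hE
  have hmemHof : ∀ (s : Fin k₁ → Finset U) (f : U),
      f ∈ Hof s ↔ τ * k₁ ≤ (cnt f s : ℝ) := by
    intro s f
    rw [hHof s]
    simp only [Finset.mem_filter, Finset.mem_univ, true_and]
    rfl
  have hsub : Sᶜ ⊆ ⋃ f, E f := by
    intro s hs
    simp only [hS, Set.mem_compl_iff, Set.mem_setOf_eq, not_and_or] at hs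
    rcases hs with hs | hs
    · rw [Set.not_subset] at hs
      obtain ⟨f, hf1, hf2⟩ := hs
      have hf1' : 1.1 * τ ≤ Q f := hf1
      refine Set.mem_iUnion.mpr ⟨f, ?_⟩
      rw [hE]
      simp only [if_pos hf1', Set.mem_setOf_eq]
      intro hcon
      exact hf2 ((hmemHof s f).mpr hcon)
    · rw [Set.not_subset] at hs
      obtain ⟨f, hf1, hf2⟩ := hs
      have hf2' : ¬ (0.9 * τ ≤ Q f) := hf2
      have hf1' : ¬ (1.1 * τ ≤ Q f) := by
        intro h; exact hf2' (by nlinarith)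
      refine Set.mem_iUnion.mpr ⟨f, ?_⟩
      rw [hE]
      simp only [if_neg hf1', if_neg hf2', Set.mem_setOf_eq]
      exact (hmemHof s f).mp hf1
  have hQ0 : ∀ f, 0 ≤ Q f := fun f => (hQ f) ▸ ENNReal.toReal_nonneg
  have hEbound : ∀ f : U, pr W (E f)
      ≤ ENNReal.ofReal ((Q f / τ) * Real.exp (-(0.001) * K)) := by
    intro f
    by_cases h1 : 1.1 * τ ≤ Q f
    · rw [hE]; simp only [if_pos h1]
      refine (tail_big μ f k₁ τ hτ0 (by rw [← hQ f]; exact h1)).trans ?_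
      apply ENNReal.ofReal_le_ofReal
      have hd : (1:ℝ) ≤ Q f / τ := by
        rw [le_div_iff₀ hτ0]; linarith
      nlinarith [Real.exp_pos (-(0.001) * K)]
    · rw [hE]; simp only [if_neg h1]
      by_cases h2 : 0.9 * τ ≤ Q f
      · simp only [if_pos h2]
        have hpe : pr W (∅ : Set (Fin k₁ → Finset U)) = 0 := by
          rw [pr]; exact MeasureTheory.measure_empty
        rw [hpe]; exact zero_le
      · simp only [if_neg h2]
        by_cases h3 : Q f = 0
        · rw [pr_cnt_zero μ f k₁ τ hKpos (by rw [← hQ f]; exact h3)]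
          exact zero_le
        · have h4 : 0 < Q f := lt_of_le_of_ne (hQ0 f) (Ne.symm h3)
          refine (tail_small μ f k₁ τ hτ0 hK2000 (by rw [← hQ f]; exact h4)
            (by rw [← hQ f]; linarith)).trans ?_
          rw [← hQ f]
  have hunion : pr W Sᶜ ≤ ∑' f : U, pr W (E f) :=
    le_trans (W.toOuterMeasure.mono hsub) (MeasureTheory.measure_iUnion_le E)
  have hsum : ∑' f : U, pr W (E f) ≤ ENNReal.ofReal (β ^ 2 / 30) := by
    calc ∑' f : U, pr W (E f)
        ≤ ∑' f : U, ENNReal.ofReal ((Q f / τ) * Real.exp (-(0.001) * K)) :=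
          ENNReal.tsum_le_tsum hEbound
      _ = ∑ f : U, ENNReal.ofReal ((Q f / τ) * Real.exp (-(0.001) * K)) := tsum_fintype _
      _ = ENNReal.ofReal (∑ f : U, (Q f / τ) * Real.exp (-(0.001) * K)) := by
          rw [ENNReal.ofReal_sum_of_nonneg]
          intro f _
          exact mul_nonneg (div_nonneg (hQ0 f) hτ0.le) (Real.exp_pos _).le
      _ ≤ ENNReal.ofReal (β ^ 2 / 30) := by
          apply ENNReal.ofReal_le_ofReal
          have hsumQ : ∑ f : U, Q f ≤ L := by
            simp_rw [hQ]
            exact sum_q_le μ L (by linarith) hsupp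
          have hsQ0 : 0 ≤ ∑ f : U, Q f := Finset.sum_nonneg fun f _ => hQ0 f
          calc ∑ f : U, (Q f / τ) * Real.exp (-(0.001) * K)
              = (∑ f : U, Q f) / τ * Real.exp (-(0.001) * K) := by
                rw [← Finset.sum_mul, ← Finset.sum_div]
            _ ≤ L / τ * Real.exp (-(0.001) * K) := by
                gcongr
            _ ≤ β ^ 2 / 30 := final_numeric L τ β K hL hτ0 hτ1 hβ0 hβ1 hK1
  have hfail : pr W Sᶜ ≤ ENNReal.ofReal (β ^ 2 / 30) := hunion.trans hsum
  have hcompl := pr_compl_ge W S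
  calc ENNReal.ofReal (1 - β ^ 2 / 30)
      = 1 - ENNReal.ofReal (β ^ 2 / 30) := by
        rw [ENNReal.ofReal_sub _ (by positivity), ENNReal.ofReal_one]
    _ ≤ 1 - pr W Sᶜ := tsub_le_tsub_left hfail 1
    _ ≤ pr W S := hcompl

end
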